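/- Let n ≥ 3 be an odd integer. The determinant of the n×n circulant matrix Circ(c₀, c₁, …, c_{n−1}) with c_i = −1 for 0 ≤ i ≤ (n−3)/2 (that is, (n−1)/2 entries equal to −1), c_{(n−1)/2} = 0, c_i = 1 for (n+1)/2 ≤ i ≤ n−2 (that is, (n−3)/2 ones), and c_{n−1} = 0, equals −1. -/

import Mathlib

open Finset Matrix

namespace Stmt4Aux

variable (m : ℕ)

/-- The character `a ↦ ζ^(a.val)` on `ZMod (2m+1)`. -/
noncomputable def ee (ζ : ℂ) (a : ZMod (2 * m + 1)) : ℂ := ζ ^ a.val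

variable {ζ : ℂ}

lemma e_zero : ee m ζ 0 = 1 := by simp [ee]

lemma e_add (h1 : ζ ^ (2 * m + 1) = 1) (a b : ZMod (2 * m + 1)) :
    ee m ζ (a + b) = ee m ζ a * ee m ζ b := by
  unfold ee
  rw [← pow_add, ZMod.val_add]
  conv_rhs => rw [← Nat.mod_add_div (a.val + b.val) (2 * m + 1)]
  rw [pow_add, pow_mul, h1, one_pow, mul_one]

lemma e_sum (h1 : ζ ^ (2 * m + 1) = 1) {ι : Type*} (s : Finset ι) (f : ι → ZMod (2 * m + 1)) :
    ee m ζ (∑ x ∈ s, f x) = ∏ x ∈ s, ee m ζ (f x) := by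
  classical
  induction s using Finset.cons_induction with
  | empty => simp [e_zero]
  | cons a s ha ih => rw [Finset.sum_cons, Finset.prod_cons, e_add m h1, ih]

lemma e_nsmul (h1 : ζ ^ (2 * m + 1) = 1) (k : ℕ) (a : ZMod (2 * m + 1)) :
    ee m ζ (k • a) = ee m ζ a ^ k := by
  induction k with
  | zero => simp [e_zero]
  | succ k ih => rw [succ_nsmul, e_add m h1, ih, pow_succ]

lemma e_pow_n (h1 : ζ ^ (2 * m + 1) = 1) (a : ZMod (2 * m + 1)) :
    ee m ζ a ^ (2 * m + 1) = 1 := by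
  unfold ee
  rw [← pow_mul, mul_comm, pow_mul, h1, one_pow]

lemma e_ne_one (hζ : IsPrimitiveRoot ζ (2 * m + 1)) {a : ZMod (2 * m + 1)} (ha : a ≠ 0) :
    ee m ζ a ≠ 1 := by
  apply hζ.pow_ne_one_of_pos_of_lt
  · exact fun h => ha ((ZMod.val_eq_zero a).mp h)
  · exact ZMod.val_lt a

lemma sum_e (hζ : IsPrimitiveRoot ζ (2 * m + 1)) {a : ZMod (2 * m + 1)} (ha : a ≠ 0) :
    ∑ j : ZMod (2 * m + 1), ee m ζ (j * a) = 0 := by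
  have h1 : ζ ^ (2 * m + 1) = 1 := hζ.pow_eq_one
  have key : ee m ζ a * ∑ j : ZMod (2 * m + 1), ee m ζ (j * a)
      = ∑ j : ZMod (2 * m + 1), ee m ζ (j * a) := by
    rw [Finset.mul_sum]
    refine Fintype.sum_equiv (Equiv.addRight 1) _ _ fun j => ?_
    rw [← e_add m h1]
    congr 1
    simp [Equiv.coe_addRight]
    ring
  have h2 : (ee m ζ a - 1) * ∑ j : ZMod (2 * m + 1), ee m ζ (j * a) = 0 := by
    rw [sub_mul, one_mul, key, sub_self]
  rcases mul_eq_zero.mp h2 with h | h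
  · exact absurd (sub_eq_zero.mp h) (e_ne_one m hζ ha)
  · exact h


/-- Transfer sums over `ZMod (2m+1)` to sums over `range (2m+1)`. -/
lemma sum_zmod {M : Type*} [AddCommMonoid M] (f : ZMod (2 * m + 1) → M) :
    ∑ l : ZMod (2 * m + 1), f l = ∑ i ∈ range (2 * m + 1), f (i : ZMod (2 * m + 1)) := by
  refine Finset.sum_nbij' (fun l => l.val) (fun i => (i : ZMod (2 * m + 1)))
    (fun l _ => ?_) (fun i _ => mem_univ _) (fun l _ => ?_) (fun i hi => ?_) (fun l _ => ?_)
  · exact mem_range.mpr (ZMod.val_lt l)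
  · exact ZMod.natCast_rightInverse l
  · exact ZMod.val_cast_of_lt (mem_range.mp hi)
  · show f l = f ((l.val : ℕ) : ZMod (2 * m + 1))
    rw [ZMod.natCast_rightInverse l]

/-- Generic reindexing of products over the nonzero elements. -/
lemma prod_reindex (h : ZMod (2 * m + 1) → ℂ) (φ ψ : ZMod (2 * m + 1) → ZMod (2 * m + 1))
    (hψφ : ∀ j, ψ (φ j) = j) (hφψ : ∀ j, φ (ψ j) = j)
    (h0 : ∀ j, j ≠ 0 → φ j ≠ 0) (h0' : ∀ j, j ≠ 0 → ψ j ≠ 0) :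
    ∏ j ∈ Finset.univ.erase (0 : ZMod (2 * m + 1)), h (φ j)
      = ∏ j ∈ Finset.univ.erase (0 : ZMod (2 * m + 1)), h j := by
  refine Finset.prod_nbij' φ ψ (fun j hj => ?_) (fun j hj => ?_)
    (fun j _ => hψφ j) (fun j _ => hφψ j) (fun j _ => rfl)
  · exact mem_erase.mpr ⟨h0 j (mem_erase.mp hj).1, mem_univ _⟩
  · exact mem_erase.mpr ⟨h0' j (mem_erase.mp hj).1, mem_univ _⟩

/-- The nonzero elements correspond to `range (2m)` via `k ↦ k+1`. -/
lemma prod_erase_eq_range (h : ℂ → ℂ) (hζ : IsPrimitiveRoot ζ (2 * m + 1)) :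
    ∏ j ∈ Finset.univ.erase (0 : ZMod (2 * m + 1)), h (ee m ζ j)
      = ∏ k ∈ range (2 * m), h (ζ ^ (k + 1)) := by
  refine Finset.prod_nbij' (fun j => j.val - 1) (fun k => ((k + 1 : ℕ) : ZMod (2 * m + 1)))
    (fun j hj => ?_) (fun k hk => ?_) (fun j hj => ?_) (fun k hk => ?_) (fun j hj => ?_)
  · have h1 : j.val ≠ 0 := fun h => (mem_erase.mp hj).1 ((ZMod.val_eq_zero j).mp h)
    have h2 : j.val < 2 * m + 1 := ZMod.val_lt j
    exact mem_range.mpr (show j.val - 1 < 2 * m by omega)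
  · refine mem_erase.mpr ⟨fun h => ?_, mem_univ _⟩
    have h2 := ZMod.val_cast_of_lt (show k + 1 < 2 * m + 1 by have := mem_range.mp hk; omega)
    rw [show ((k + 1 : ℕ) : ZMod (2 * m + 1)) = 0 from h, ZMod.val_zero] at h2
    omega
  · have h1 : j.val ≠ 0 := fun h => (mem_erase.mp hj).1 ((ZMod.val_eq_zero j).mp h)
    show ((j.val - 1 + 1 : ℕ) : ZMod (2 * m + 1)) = j
    have h2 : j.val - 1 + 1 = j.val := by omega
    rw [h2, ZMod.natCast_rightInverse j]
  · show ((k + 1 : ℕ) : ZMod (2 * m + 1)).val - 1 = k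
    rw [ZMod.val_cast_of_lt (show k + 1 < 2 * m + 1 by have := mem_range.mp hk; omega)]
    omega
  · show h (ee m ζ j) = h (ζ ^ (j.val - 1 + 1))
    congr 1
    unfold ee
    congr 1
    have h1 : j.val ≠ 0 := fun h => (mem_erase.mp hj).1 ((ZMod.val_eq_zero j).mp h)
    omega

lemma prod_sub_one (hζ : IsPrimitiveRoot ζ (2 * m + 1)) :
    ∏ j ∈ Finset.univ.erase (0 : ZMod (2 * m + 1)), (ee m ζ j - 1) = (2 * m + 1 : ℂ) := by
  have := prod_erase_eq_range m (fun x => x - 1) hζ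
  rw [this]
  have h := hζ.prod_pow_sub_one_eq_order
  have hone : ((-1 : ℂ)) ^ (2 * m) = 1 := by
    rw [pow_mul]; norm_num
  rw [hone, one_mul] at h
  rw [h]
  push_cast
  ring

lemma prod_one_sub (hζ : IsPrimitiveRoot ζ (2 * m + 1)) :
    ∏ j ∈ Finset.univ.erase (0 : ZMod (2 * m + 1)), (1 - ee m ζ j) = (2 * m + 1 : ℂ) := by
  have := prod_erase_eq_range m (fun x => 1 - x) hζ
  rw [this]
  have h := hζ.prod_one_sub_pow_eq_order
  rw [h]
  push_cast
  ring

lemma sum_univ_zmod_eq_zero : ∑ j : ZMod (2 * m + 1), j = 0 := by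
  set S := ∑ j : ZMod (2 * m + 1), j with hS
  have h2 : ∑ j : ZMod (2 * m + 1), -j = ∑ j : ZMod (2 * m + 1), j :=
    Fintype.sum_equiv (Equiv.neg _) _ _ fun j => by simp
  have hneg : S = -S := by
    conv_lhs => rw [hS, ← h2]
    rw [Finset.sum_neg_distrib, hS]
  have hSS : S + S = 0 := by linear_combination hneg
  have hu : ((2 * m + 2 : ℕ) : ZMod (2 * m + 1)) = 1 := by
    have : (2 * m + 2 : ℕ) = (2 * m + 1) + 1 := by omega
    rw [this, Nat.cast_add, ZMod.natCast_self, Nat.cast_one, zero_add]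
  calc S = ((2 * m + 2 : ℕ) : ZMod (2 * m + 1)) * S := by rw [hu, one_mul]
    _ = ((m + 1 : ℕ) : ZMod (2 * m + 1)) * (S + S) := by push_cast; ring
    _ = 0 := by rw [hSS, mul_zero]

lemma prod_e (h1 : ζ ^ (2 * m + 1) = 1) :
    ∏ j ∈ Finset.univ.erase (0 : ZMod (2 * m + 1)), ee m ζ j = 1 := by
  rw [← e_sum m h1]
  have : ∑ j ∈ Finset.univ.erase (0 : ZMod (2 * m + 1)), j
      = ∑ j : ZMod (2 * m + 1), j := Finset.sum_erase _ rfl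
  rw [this, sum_univ_zmod_eq_zero, e_zero]


/-- Splitting the symbol sum into its pieces. -/
lemma Gsplit (hm : 1 ≤ m) (ω : ℂ) :
    ∑ i ∈ range (2 * m + 1),
        (if i < m then (-1 : ℂ) else if m < i ∧ i < 2 * m then 1 else 0) * ω ^ i
      = -(∑ i ∈ range m, ω ^ i) + ω ^ (m + 1) * ∑ i ∈ range (m - 1), ω ^ i := by
  have h1 : range (2 * m + 1) = Finset.Ico 0 (2 * m + 1) := by rw [Finset.range_eq_Ico]
  rw [h1]
  rw [← Finset.sum_Ico_consecutive _ (Nat.zero_le m) (by omega : m ≤ 2 * m + 1)]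
  rw [← Finset.sum_Ico_consecutive _ (by omega : m ≤ m + 1) (by omega : m + 1 ≤ 2 * m + 1)]
  rw [← Finset.sum_Ico_consecutive _ (by omega : m + 1 ≤ 2 * m) (by omega : 2 * m ≤ 2 * m + 1)]
  have e1 : ∑ i ∈ Finset.Ico 0 m,
      (if i < m then (-1 : ℂ) else if m < i ∧ i < 2 * m then 1 else 0) * ω ^ i
      = ∑ i ∈ range m, -(ω ^ i) := by
    rw [Finset.range_eq_Ico]
    refine Finset.sum_congr rfl fun i hi => ?_
    have := (Finset.mem_Ico.mp hi).2
    rw [if_pos this]; ring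
  have e2 : ∑ i ∈ Finset.Ico m (m + 1),
      (if i < m then (-1 : ℂ) else if m < i ∧ i < 2 * m then 1 else 0) * ω ^ i = 0 := by
    refine Finset.sum_eq_zero fun i hi => ?_
    have h := Finset.mem_Ico.mp hi
    rw [if_neg (by omega), if_neg (by omega), zero_mul]
  have e3 : ∑ i ∈ Finset.Ico (m + 1) (2 * m),
      (if i < m then (-1 : ℂ) else if m < i ∧ i < 2 * m then 1 else 0) * ω ^ i
      = ∑ i ∈ Finset.Ico (m + 1) (2 * m), ω ^ i := by
    refine Finset.sum_congr rfl fun i hi => ?_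
    have h := Finset.mem_Ico.mp hi
    rw [if_neg (by omega), if_pos (by omega), one_mul]
  have e4 : ∑ i ∈ Finset.Ico (2 * m) (2 * m + 1),
      (if i < m then (-1 : ℂ) else if m < i ∧ i < 2 * m then 1 else 0) * ω ^ i = 0 := by
    refine Finset.sum_eq_zero fun i hi => ?_
    have h := Finset.mem_Ico.mp hi
    rw [if_neg (by omega), if_neg (by omega), zero_mul]
  rw [e1, e2, e3, e4]
  have e5 : ∑ i ∈ Finset.Ico (m + 1) (2 * m), ω ^ i
      = ∑ i ∈ range (m - 1), ω ^ (m + 1 + i) := by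
    rw [Finset.sum_Ico_eq_sum_range]
    have hmm : 2 * m - (m + 1) = m - 1 := by omega
    rw [hmm]
  rw [e5, Finset.sum_neg_distrib]
  rw [Finset.mul_sum]
  simp only [pow_add]
  ring

/-- The key pointwise identity at an `n`-th root of unity. -/
lemma key_id (hm : 1 ≤ m) {ω : ℂ} (hω : ω ^ (2 * m + 1) = 1) :
    (ω - 1) * ω * (∑ i ∈ range (2 * m + 1),
        (if i < m then (-1 : ℂ) else if m < i ∧ i < 2 * m then 1 else 0) * ω ^ i)
      = (1 + ω) * (1 - ω ^ (m + 1)) := by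
  obtain ⟨k, rfl⟩ : ∃ k, m = k + 1 := ⟨m - 1, by omega⟩
  rw [Gsplit (k + 1) hm ω]
  have h1 : (∑ i ∈ range (k + 1), ω ^ i) * (ω - 1) = ω ^ (k + 1) - 1 := geom_sum_mul ω (k + 1)
  have h2 : (∑ i ∈ range (k + 1 - 1), ω ^ i) * (ω - 1) = ω ^ k - 1 := by
    rw [show k + 1 - 1 = k from rfl]; exact geom_sum_mul ω k
  rw [show k + 1 - 1 = k from rfl] at h2 ⊢
  linear_combination (-ω) * h1 + ω ^ (k + 1 + 2) * h2 + hω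

lemma prod_one_add (hζ : IsPrimitiveRoot ζ (2 * m + 1)) :
    ∏ j ∈ Finset.univ.erase (0 : ZMod (2 * m + 1)), (1 + ee m ζ j) = 1 := by
  have h1 : ζ ^ (2 * m + 1) = 1 := hζ.pow_eq_one
  have hu : ((2 * m + 2 : ℕ) : ZMod (2 * m + 1)) = 1 := by
    have : (2 * m + 2 : ℕ) = (2 * m + 1) + 1 := by omega
    rw [this, Nat.cast_add, ZMod.natCast_self, Nat.cast_one, zero_add]
  have hre : ∏ j ∈ Finset.univ.erase (0 : ZMod (2 * m + 1)), (1 - ee m ζ (j + j))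
      = ∏ j ∈ Finset.univ.erase (0 : ZMod (2 * m + 1)), (1 - ee m ζ j) := by
    refine prod_reindex m (fun x => 1 - ee m ζ x) (fun j => j + j)
      (fun j => ((m + 1 : ℕ) : ZMod (2 * m + 1)) * j) (fun j => ?_) (fun j => ?_)
      (fun j hj h => ?_) (fun j hj h => ?_)
    · show ((m + 1 : ℕ) : ZMod (2 * m + 1)) * (j + j) = j
      have : ((m + 1 : ℕ) : ZMod (2 * m + 1)) * (j + j)
          = ((2 * m + 2 : ℕ) : ZMod (2 * m + 1)) * j := by push_cast; ring
      rw [this, hu, one_mul]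
    · show (((m + 1 : ℕ) : ZMod (2 * m + 1)) * j) + (((m + 1 : ℕ) : ZMod (2 * m + 1)) * j) = j
      have : (((m + 1 : ℕ) : ZMod (2 * m + 1)) * j) + (((m + 1 : ℕ) : ZMod (2 * m + 1)) * j)
          = ((2 * m + 2 : ℕ) : ZMod (2 * m + 1)) * j := by push_cast; ring
      rw [this, hu, one_mul]
    · apply hj
      replace h : j + j = 0 := h
      have : j = ((m + 1 : ℕ) : ZMod (2 * m + 1)) * (j + j) := by
        have h2 : ((m + 1 : ℕ) : ZMod (2 * m + 1)) * (j + j)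
            = ((2 * m + 2 : ℕ) : ZMod (2 * m + 1)) * j := by push_cast; ring
        rw [h2, hu, one_mul]
      rw [this, h, mul_zero]
    · apply hj
      replace h : ((m + 1 : ℕ) : ZMod (2 * m + 1)) * j = 0 := h
      have : j = (2 : ZMod (2 * m + 1)) * (((m + 1 : ℕ) : ZMod (2 * m + 1)) * j) := by
        have h2 : (2 : ZMod (2 * m + 1)) * (((m + 1 : ℕ) : ZMod (2 * m + 1)) * j)
            = ((2 * m + 2 : ℕ) : ZMod (2 * m + 1)) * j := by push_cast; ring
        rw [h2, hu, one_mul]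
      rw [this, h, mul_zero]
  have hfac : ∀ j : ZMod (2 * m + 1), 1 - ee m ζ (j + j)
      = (1 - ee m ζ j) * (1 + ee m ζ j) := by
    intro j
    rw [e_add m h1]
    ring
  rw [Finset.prod_congr rfl fun j _ => hfac j, Finset.prod_mul_distrib,
    prod_one_sub m hζ] at hre
  have hn : ((2 * m + 1 : ℕ) : ℂ) ≠ 0 := Nat.cast_ne_zero.mpr (by omega)
  push_cast at hn
  exact mul_left_cancel₀ hn (by rw [hre, mul_one])


/-- `prod_reindex` with the zero conditions derived automatically. -/
lemma prod_reindex' (h : ZMod (2 * m + 1) → ℂ) (φ ψ : ZMod (2 * m + 1) → ZMod (2 * m + 1))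
    (hψφ : ∀ j, ψ (φ j) = j) (hφψ : ∀ j, φ (ψ j) = j)
    (hφ0 : φ 0 = 0) (hψ0 : ψ 0 = 0) :
    ∏ j ∈ Finset.univ.erase (0 : ZMod (2 * m + 1)), h (φ j)
      = ∏ j ∈ Finset.univ.erase (0 : ZMod (2 * m + 1)), h j :=
  prod_reindex m h φ ψ hψφ hφψ
    (fun j hj hh => hj (by rw [← hψφ j, hh, hψ0]))
    (fun j hj hh => hj (by rw [← hφψ j, hh, hφ0]))

/-- The complexified circulant vector. -/
noncomputable def cc : ZMod (2 * m + 1) → ℂ := fun i =>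
  if i.val < m then (-1 : ℂ) else if m < i.val ∧ i.val < 2 * m then 1 else 0

/-- The eigenvalues. -/
noncomputable def dd (ζ : ℂ) (j : ZMod (2 * m + 1)) : ℂ :=
  ∑ l : ZMod (2 * m + 1), cc m l * ee m ζ (-(l * j))

lemma dd_eq (h1 : ζ ^ (2 * m + 1) = 1) (j : ZMod (2 * m + 1)) :
    dd m ζ j = ∑ i ∈ range (2 * m + 1),
      (if i < m then (-1 : ℂ) else if m < i ∧ i < 2 * m then 1 else 0) * ee m ζ (-j) ^ i := by
  unfold dd
  rw [sum_zmod]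
  refine Finset.sum_congr rfl fun i hi => ?_
  have hv : ((i : ZMod (2 * m + 1))).val = i := ZMod.val_cast_of_lt (mem_range.mp hi)
  congr 1
  · unfold cc; rw [hv]
  · rw [← e_nsmul m h1, nsmul_eq_mul, mul_neg]

/-- The DFT matrix. -/
noncomputable def FF (ζ : ℂ) : Matrix (ZMod (2 * m + 1)) (ZMod (2 * m + 1)) ℂ :=
  Matrix.of fun i j => ee m ζ (i * j)

lemma AF_FD (h1 : ζ ^ (2 * m + 1) = 1) :
    circulant (cc m) * FF m ζ = FF m ζ * Matrix.diagonal (dd m ζ) := by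
  ext i k
  rw [Matrix.mul_apply, Matrix.mul_diagonal]
  simp only [circulant_apply, FF, Matrix.of_apply]
  rw [dd, Finset.mul_sum]
  refine Fintype.sum_equiv (Equiv.subLeft i) _ _ fun l => ?_
  show cc m (i - l) * ee m ζ (l * k) = ee m ζ (i * k) * (cc m (i - l) * ee m ζ (-((i - l) * k)))
  rw [show l * k = (i * k) + -((i - l) * k) by ring, e_add m h1]
  ring

lemma FFinv (hζ : IsPrimitiveRoot ζ (2 * m + 1)) :
    FF m ζ * (Matrix.of fun i j => ee m ζ (-(i * j)))
      = ((2 * m + 1 : ℕ) : ℂ) • (1 : Matrix (ZMod (2 * m + 1)) (ZMod (2 * m + 1)) ℂ) := by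
  have h1 : ζ ^ (2 * m + 1) = 1 := hζ.pow_eq_one
  ext i k
  rw [Matrix.mul_apply]
  simp only [FF, Matrix.of_apply, Matrix.smul_apply, Matrix.one_apply, smul_eq_mul]
  have hterm : ∀ j : ZMod (2 * m + 1),
      ee m ζ (i * j) * ee m ζ (-(j * k)) = ee m ζ (j * (i - k)) := by
    intro j
    rw [← e_add m h1]
    congr 1
    ring
  rw [Finset.sum_congr rfl fun j _ => hterm j]
  by_cases h : i = k
  · subst h
    simp only [sub_self, mul_zero, e_zero, Finset.sum_const, Finset.card_univ, ZMod.card,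
      nsmul_eq_mul, mul_one, if_pos rfl]
    simp
  · rw [if_neg h, sum_e m hζ (sub_ne_zero.mpr h), mul_zero]

lemma detF_ne (hζ : IsPrimitiveRoot ζ (2 * m + 1)) : (FF m ζ).det ≠ 0 := by
  intro h
  have h2 := congrArg Matrix.det (FFinv m hζ)
  rw [Matrix.det_mul, h, zero_mul, Matrix.det_smul, Matrix.det_one, mul_one] at h2
  exact pow_ne_zero _ (Nat.cast_ne_zero.mpr (show 2 * m + 1 ≠ 0 by omega)) h2.symm

lemma dd_zero (hm : 1 ≤ m) (h1 : ζ ^ (2 * m + 1) = 1) : dd m ζ 0 = -1 := by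
  rw [dd_eq m h1 0, neg_zero, e_zero, Gsplit m hm 1]
  simp only [one_pow, Finset.sum_const, card_range, nsmul_eq_mul, mul_one, one_mul]
  rw [Nat.cast_sub hm]
  push_cast
  ring

lemma prod_dd (hm : 1 ≤ m) (hζ : IsPrimitiveRoot ζ (2 * m + 1)) :
    ∏ j ∈ Finset.univ.erase (0 : ZMod (2 * m + 1)), dd m ζ j = 1 := by
  have h1 : ζ ^ (2 * m + 1) = 1 := hζ.pow_eq_one
  have hu : ((2 * m + 2 : ℕ) : ZMod (2 * m + 1)) = 1 := by
    have : (2 * m + 2 : ℕ) = (2 * m + 1) + 1 := by omega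
    rw [this, Nat.cast_add, ZMod.natCast_self, Nat.cast_one, zero_add]
  have key : ∏ j ∈ Finset.univ.erase (0 : ZMod (2 * m + 1)),
        ((ee m ζ (-j) - 1) * ee m ζ (-j) * dd m ζ j)
      = ∏ j ∈ Finset.univ.erase (0 : ZMod (2 * m + 1)),
        ((1 + ee m ζ (-j)) * (1 - ee m ζ (-j) ^ (m + 1))) := by
    refine Finset.prod_congr rfl fun j _ => ?_
    rw [dd_eq m h1 j]
    exact key_id m hm (e_pow_n m h1 (-j))
  simp only [Finset.prod_mul_distrib] at key
  have P1 : ∏ j ∈ Finset.univ.erase (0 : ZMod (2 * m + 1)), (ee m ζ (-j) - 1)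
      = (2 * (m : ℂ) + 1) := by
    have := prod_reindex' m (fun x => ee m ζ x - 1) (fun j => -j) (fun j => -j)
      (fun j => neg_neg j) (fun j => neg_neg j) neg_zero neg_zero
    rw [this, prod_sub_one m hζ]
  have P2 : ∏ j ∈ Finset.univ.erase (0 : ZMod (2 * m + 1)), ee m ζ (-j) = 1 := by
    have := prod_reindex' m (fun x => ee m ζ x) (fun j => -j) (fun j => -j)
      (fun j => neg_neg j) (fun j => neg_neg j) neg_zero neg_zero
    rw [this, prod_e m h1]
  have P3 : ∏ j ∈ Finset.univ.erase (0 : ZMod (2 * m + 1)), (1 + ee m ζ (-j)) = 1 := by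
    have := prod_reindex' m (fun x => 1 + ee m ζ x) (fun j => -j) (fun j => -j)
      (fun j => neg_neg j) (fun j => neg_neg j) neg_zero neg_zero
    rw [this, prod_one_add m hζ]
  have P4 : ∏ j ∈ Finset.univ.erase (0 : ZMod (2 * m + 1)), (1 - ee m ζ (-j) ^ (m + 1))
      = (2 * (m : ℂ) + 1) := by
    have hpow : ∀ j : ZMod (2 * m + 1),
        ee m ζ (-j) ^ (m + 1) = ee m ζ (((m + 1 : ℕ) : ZMod (2 * m + 1)) * (-j)) := by
      intro j
      rw [← e_nsmul m h1, nsmul_eq_mul]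
    rw [Finset.prod_congr rfl fun j _ => by rw [hpow j]]
    have hre := prod_reindex' m (fun x => 1 - ee m ζ x)
      (fun j => ((m + 1 : ℕ) : ZMod (2 * m + 1)) * (-j))
      (fun j => ((2 : ℕ) : ZMod (2 * m + 1)) * (-j))
      (fun j => ?_) (fun j => ?_)
      (show ((m + 1 : ℕ) : ZMod (2 * m + 1)) * (-(0 : ZMod (2 * m + 1))) = 0 by
        rw [neg_zero, mul_zero])
      (show ((2 : ℕ) : ZMod (2 * m + 1)) * (-(0 : ZMod (2 * m + 1))) = 0 by
        rw [neg_zero, mul_zero])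
    · rw [hre, prod_one_sub m hζ]
    · show ((2 : ℕ) : ZMod (2 * m + 1)) * -(((m + 1 : ℕ) : ZMod (2 * m + 1)) * (-j)) = j
      have h2 : ((2 : ℕ) : ZMod (2 * m + 1)) * -(((m + 1 : ℕ) : ZMod (2 * m + 1)) * (-j))
          = ((2 * m + 2 : ℕ) : ZMod (2 * m + 1)) * j := by push_cast; ring
      rw [h2, hu, one_mul]
    · show ((m + 1 : ℕ) : ZMod (2 * m + 1)) * -(((2 : ℕ) : ZMod (2 * m + 1)) * (-j)) = j
      have h2 : ((m + 1 : ℕ) : ZMod (2 * m + 1)) * -(((2 : ℕ) : ZMod (2 * m + 1)) * (-j))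
          = ((2 * m + 2 : ℕ) : ZMod (2 * m + 1)) * j := by push_cast; ring
      rw [h2, hu, one_mul]
  rw [P1, P2, P3, P4, mul_one, one_mul] at key
  have hn : ((2 * m + 1 : ℕ) : ℂ) ≠ 0 := Nat.cast_ne_zero.mpr (by omega)
  push_cast at hn
  exact mul_left_cancel₀ hn (key.trans (mul_one _).symm)

end Stmt4Aux


/-- **Hoshi–Kang–Yamasaki, Lemma 3.6(2).**
Let `n = 2m+1 ≥ 3` be an odd integer.  The determinant of the `n × n` circulant
matrix whose first column consists of `(n-1)/2 = m` entries `-1`, then a `0`, then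
`(n-3)/2 = m-1` ones, then a final `0`, equals `-1`. -/
theorem stmt4 (m : ℕ) (hm : 1 ≤ m) :
    (Matrix.circulant (fun i : ZMod (2 * m + 1) =>
      if i.val < m then (-1 : ℤ) else if m < i.val ∧ i.val < 2 * m then 1 else 0)).det
      = -1 := by
  obtain ⟨ζ, hζ⟩ : ∃ ζ : ℂ, IsPrimitiveRoot ζ (2 * m + 1) :=
    ⟨_, Complex.isPrimitiveRoot_exp _ (by omega)⟩
  have h1 : ζ ^ (2 * m + 1) = 1 := hζ.pow_eq_one
  have hmap : (Matrix.circulant (fun i : ZMod (2 * m + 1) =>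
      if i.val < m then (-1 : ℤ) else if m < i.val ∧ i.val < 2 * m then 1 else 0)).map
        (Int.cast : ℤ → ℂ) = Matrix.circulant (Stmt4Aux.cc m) := by
    rw [Matrix.map_circulant]
    refine congrArg Matrix.circulant (funext fun i => ?_)
    unfold Stmt4Aux.cc
    split_ifs <;> simp
  have hdet : (((Matrix.circulant (fun i : ZMod (2 * m + 1) =>
      if i.val < m then (-1 : ℤ) else if m < i.val ∧ i.val < 2 * m then 1 else 0)).det : ℤ) : ℂ)
      = (Matrix.circulant (Stmt4Aux.cc m)).det := by
    rw [← hmap]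
    exact RingHom.map_det (Int.castRingHom ℂ) _
  have hAD : (Matrix.circulant (Stmt4Aux.cc m)).det
      = (Matrix.diagonal (Stmt4Aux.dd m ζ)).det := by
    have h2 := congrArg Matrix.det (Stmt4Aux.AF_FD m h1)
    rw [Matrix.det_mul, Matrix.det_mul] at h2
    exact mul_right_cancel₀ (Stmt4Aux.detF_ne m hζ) (h2.trans (mul_comm _ _))
  have hDD : (Matrix.diagonal (Stmt4Aux.dd m ζ)).det = -1 := by
    rw [Matrix.det_diagonal,
      ← Finset.mul_prod_erase Finset.univ _ (Finset.mem_univ (0 : ZMod (2 * m + 1))),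
      Stmt4Aux.prod_dd m hm hζ, Stmt4Aux.dd_zero m hm h1, mul_one]
  have hfin : (((Matrix.circulant (fun i : ZMod (2 * m + 1) =>
      if i.val < m then (-1 : ℤ) else if m < i.val ∧ i.val < 2 * m then 1 else 0)).det : ℤ) : ℂ)
      = ((-1 : ℤ) : ℂ) := by
    rw [hdet, hAD, hDD]; norm_num
  exact Int.cast_injective hfin
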